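/- Let $A$ be a negative operator on a Banach space $X$, $V \in \mathcal{I}$ a symmetrically normed operator ideal, and $\mu$ the representing measure of a negative complete Bernstein function $\varphi$. Then for $z \in \mathbb{C}$ with $|z| < 1/(\|V\|_{\mathcal{I}} M_A)$, the function $z \mapsto \varphi(A+zV) - \varphi(A)$ is analytic with values in $\mathcal{I}$ and admits the power series expansion $\varphi(A+zV)-\varphi(A) = \sum_{n=1}^\infty z^n C_n$ converging absolutely in the $\mathcal{I}$-norm, where $C_n = \int_0^\infty (R(t,A)V)^n R(t,A)\, t\, d\mu(t)$. -/

import Mathlib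

open MeasureTheory Set

variable {X : Type*} [NormedAddCommGroup X] [NormedSpace ℂ X] [CompleteSpace X]

/-- `R` is the resolvent of the (possibly unbounded) operator `A` at the real point `t`,
i.e. `R` is an everywhere defined two-sided bounded inverse of `t•I - A`. -/
structure IsResolvent (A : X →ₗ.[ℂ] X) (t : ℝ) (R : X →L[ℂ] X) : Prop where
  mem : ∀ x : X, R x ∈ A.domain
  right_inv : ∀ x : X, (t : ℂ) • (R x) - A ⟨R x, mem x⟩ = x
  left_inv : ∀ x : A.domain, R ((t : ℂ) • (x : X) - A x) = x

/-- The sum of an unbounded operator and a bounded operator, defined on the domain of the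
unbounded one. -/
noncomputable def pAdd (A : X →ₗ.[ℂ] X) (V : X →L[ℂ] X) : X →ₗ.[ℂ] X where
  domain := A.domain
  toFun := A.toFun + (V : X →ₗ[ℂ] X).comp A.domain.subtype

/-- A symmetrically normed operator ideal in `L(X)`: a two-sided ideal with a complete norm
`inorm` dominating the operator norm and satisfying `‖A S B‖_I ≤ ‖A‖ ‖S‖_I ‖B‖`.
Completeness is encoded through closure under Bochner integration with a dominating
`I`-norm bound. -/
structure OperatorIdeal (X : Type*) [NormedAddCommGroup X] [NormedSpace ℂ X] where
  Mem : (X →L[ℂ] X) → Prop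
  inorm : (X →L[ℂ] X) → ℝ
  zero_mem : Mem 0
  add_mem : ∀ {S T}, Mem S → Mem T → Mem (S + T)
  smul_mem : ∀ (c : ℂ) {S}, Mem S → Mem (c • S)
  comp_mem : ∀ (A : X →L[ℂ] X) {S} (B : X →L[ℂ] X), Mem S → Mem (A.comp (S.comp B))
  inorm_nonneg : ∀ S, 0 ≤ inorm S
  inorm_add_le : ∀ S T, inorm (S + T) ≤ inorm S + inorm T
  inorm_smul : ∀ (c : ℂ) (S), inorm (c • S) = ‖c‖ * inorm S
  inorm_comp_le : ∀ (A S B : X →L[ℂ] X), Mem S →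
    inorm (A.comp (S.comp B)) ≤ ‖A‖ * inorm S * ‖B‖
  opNorm_le_inorm : ∀ S, Mem S → ‖S‖ ≤ inorm S
  integral_mem : ∀ (μ : MeasureTheory.Measure ℝ) (f : ℝ → (X →L[ℂ] X)) (g : ℝ → ℝ),
    MeasureTheory.Integrable g μ → (∀ᵐ t ∂μ, Mem (f t) ∧ inorm (f t) ≤ g t) →
    MeasureTheory.Integrable f μ →
    Mem (∫ t, f t ∂μ) ∧ inorm (∫ t, f t ∂μ) ≤ ∫ t, g t ∂μ

section AuxLemmas

omit [CompleteSpace X] in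
lemma pAdd_apply (A : X →ₗ.[ℂ] X) (W : X →L[ℂ] X) (x : A.domain) :
    pAdd A W x = A x + W x := rfl

omit [CompleteSpace X] in
lemma res2a {A : X →ₗ.[ℂ] X} {W : X →L[ℂ] X} {t : ℝ} {R S : X →L[ℂ] X}
    (hR : IsResolvent A t R) (hS : IsResolvent (pAdd A W) t S) :
    S = R + S.comp (W.comp R) := by
  ext x
  have hy : R x ∈ (pAdd A W).domain := hR.mem x
  have h1 := hS.left_inv ⟨R x, hy⟩
  have h3 := hR.right_inv x
  have h2 : ((t:ℂ)) • (R x) - (pAdd A W) ⟨R x, hy⟩ = x - W (R x) := by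
    show (t:ℂ) • R x - (A ⟨R x, hR.mem x⟩ + W (R x)) = x - W (R x)
    rw [sub_add_eq_sub_sub, h3]
  rw [h2, map_sub] at h1
  simpa using eq_add_of_sub_eq h1

omit [CompleteSpace X] in
lemma res2b {A : X →ₗ.[ℂ] X} {W : X →L[ℂ] X} {t : ℝ} {R S : X →L[ℂ] X}
    (hR : IsResolvent A t R) (hS : IsResolvent (pAdd A W) t S) :
    S = R + R.comp (W.comp S) := by
  ext x
  have hy : S x ∈ A.domain := hS.mem x
  have h3 : (t:ℂ) • S x - (A ⟨S x, hy⟩ + W (S x)) = x := hS.right_inv x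
  rw [sub_add_eq_sub_sub] at h3
  have h2 : ((t:ℂ)) • (S x) - A ⟨S x, hy⟩ = x + W (S x) := eq_add_of_sub_eq h3
  have h1 := hR.left_inv ⟨S x, hy⟩
  rw [h2, map_add] at h1
  simpa using h1.symm

omit [CompleteSpace X] in
lemma res1 {A : X →ₗ.[ℂ] X} {s t : ℝ} {R S : X →L[ℂ] X}
    (hR : IsResolvent A s R) (hS : IsResolvent A t S) :
    S = R + ((s : ℂ) - t) • (R.comp S) := by
  ext x
  have hy : S x ∈ A.domain := hS.mem x
  have h3 : (t:ℂ) • S x - A ⟨S x, hy⟩ = x := hS.right_inv x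
  have h2 : (s:ℂ) • S x - A ⟨S x, hy⟩ = ((t:ℂ) • S x - A ⟨S x, hy⟩) + ((s:ℂ) - t) • S x := by
    module
  rw [h3] at h2
  have h1 := hR.left_inv ⟨S x, hy⟩
  rw [h2, map_add, _root_.map_smul] at h1
  simpa using h1.symm

lemma res_neumann {A : X →ₗ.[ℂ] X} {W : X →L[ℂ] X} {t : ℝ} {R S : X →L[ℂ] X}
    (hR : IsResolvent A t R) (hS : IsResolvent (pAdd A W) t S)
    (hb : ‖R * W‖ < 1) :
    S = (∑' n : ℕ, (R * W) ^ n) * R := by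
  have h := res2b hR hS
  have h2 : (1 - R * W) * S = R := by
    have hc : R.comp (W.comp S) = (R * W) * S := by rw [mul_assoc]; rfl
    rw [hc] at h
    rw [sub_mul, one_mul]
    exact sub_eq_iff_eq_add.mpr h
  calc S = ((∑' n : ℕ, (R*W)^n) * (1 - R*W)) * S := by
            rw [geom_series_mul_neg _ hb, one_mul]
  _ = (∑' n : ℕ, (R*W)^n) * ((1 - R*W) * S) := mul_assoc _ _ _
  _ = _ := by rw [h2]

lemma pointwise_hasSum {A : X →ₗ.[ℂ] X} {V : X →L[ℂ] X} {z : ℂ} {t : ℝ} {R S : X →L[ℂ] X}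
    (hR : IsResolvent A t R) (hS : IsResolvent (pAdd A (z • V)) t S)
    (hb : ‖R * (z • V)‖ < 1) :
    HasSum (fun n : ℕ => z ^ (n+1) • ((R * V) ^ (n+1) * R)) (S.comp ((z • V).comp R)) := by
  set b := R * (z • V) with hbdef
  have hgeo : HasSum (fun n : ℕ => b ^ n) (∑' n : ℕ, b ^ n) :=
    (summable_geometric_of_norm_lt_one hb).hasSum
  have key := hgeo.mul_right (b * R)
  have h1 : (fun n : ℕ => b ^ n * (b * R)) = fun n : ℕ => z ^ (n+1) • ((R * V) ^ (n+1) * R) := by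
    funext n
    have hb' : b = z • (R * V) := by rw [hbdef, mul_smul_comm]
    rw [← mul_assoc, ← pow_succ, hb', smul_pow, smul_mul_assoc]
  have h2 : (∑' n : ℕ, b ^ n) * (b * R) = S.comp ((z • V).comp R) := by
    have hc : S.comp ((z • V).comp R) = S * ((z • V) * R) := rfl
    rw [hc, res_neumann hR hS hb]; simp only [hbdef, mul_assoc]
  rw [h1, h2] at key
  exact key

omit [CompleteSpace X] in
lemma pow_mul_norm (R W : X →L[ℂ] X) : ∀ n : ℕ, ‖(R*W)^n * R‖ ≤ (‖R‖*‖W‖)^n * ‖R‖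
  | 0 => by simp
  | (n+1) => by
    calc ‖(R*W)^(n+1) * R‖ = ‖(R*W) * ((R*W)^n * R)‖ := by rw [pow_succ', mul_assoc]
    _ ≤ ‖R*W‖ * ‖(R*W)^n * R‖ := norm_mul_le _ _
    _ ≤ (‖R‖*‖W‖) * ((‖R‖*‖W‖)^n * ‖R‖) :=
        mul_le_mul (norm_mul_le R W) (pow_mul_norm R W n) (norm_nonneg _) (by positivity)
    _ = (‖R‖*‖W‖)^(n+1) * ‖R‖ := by rw [pow_succ']; ring

omit [CompleteSpace X] in
lemma decomp (R W : X →L[ℂ] X) (n : ℕ) :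
    (R*W)^(n+1) * R = R.comp (W.comp ((R*W)^n * R)) := by
  have hc : R.comp (W.comp ((R*W)^n * R)) = R * (W * ((R*W)^n * R)) := rfl
  rw [hc, pow_succ']
  simp only [mul_assoc]

lemma real_bound {M c t : ℝ} (hM : 0 ≤ M) (hc : 0 ≤ c) (ht : 0 < t) (n : ℕ) :
    t * ((M / (1+t) * c) ^ (n+1) * (M / (1+t))) ≤ (c * M)^(n+1) * M * (1+t)⁻¹ := by
  have h1t : (0:ℝ) < 1 + t := by linarith
  have hle : t ≤ (1+t)^(n+1) :=
    le_trans (by linarith) (le_self_pow₀ (by linarith) (Nat.succ_ne_zero n))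
  have hexp : t * ((M / (1+t) * c) ^ (n+1) * (M / (1+t)))
      = (c * M)^(n+1) * M * (t / (1+t)^(n+2)) := by
    rw [mul_pow, div_pow]
    field_simp
    ring
  rw [hexp]
  apply mul_le_mul_of_nonneg_left _ (by positivity)
  rw [div_le_iff₀ (by positivity)]
  have : (1+t)⁻¹ * (1+t)^(n+2) = (1+t)^(n+1) := by
    rw [pow_succ']
    field_simp
  rw [this]
  exact hle

end AuxLemmas

/-- Theorem 2: for a negative operator `A`, `V ∈ I` and a negative complete Bernstein function
with representing measure `μ`, the `I`-valued function `z ↦ φ(A+zV) - φ(A)` is analytic on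
`{|z| < 1/(‖V‖_I M_A)}` with power series `∑ zⁿ Cₙ`, `Cₙ = ∫₀^∞ (R(t,A)V)ⁿ R(t,A) t dμ(t)`,
converging absolutely in the `I`-norm.  Here
`φ(A+zV) - φ(A) = ∫ t R(t,A+zV) (zV) R(t,A) dμ(t)`. -/
theorem power_series_expansion_negative
    (I : OperatorIdeal X)
    (A : X →ₗ.[ℂ] X)
    (hAclosed : IsClosed (A.graph : Set (X × X)))
    (hAdense : Dense (A.domain : Set X))
    (RA : ℝ → (X →L[ℂ] X))
    (hRA : ∀ t ≥ (0 : ℝ), IsResolvent A t (RA t))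
    (M : ℝ) (hM : IsLUB ((fun t => (1 + t) * ‖RA t‖) '' Ioi (0 : ℝ)) M)
    (μ : Measure ℝ) (hsupp : μ (Iic (0 : ℝ)) = 0)
    (hμ : Integrable (fun t => (1 + t)⁻¹) μ)
    (V : X →L[ℂ] X) (hV : I.Mem V)
    (Rz : ℂ → ℝ → (X →L[ℂ] X))
    (hRz : ∀ z : ℂ, ‖z‖ < 1 / (I.inorm V * M) →
      ∀ t ≥ (0 : ℝ), IsResolvent (pAdd A (z • V)) t (Rz z t)) :
    (∀ z : ℂ, ‖z‖ < 1 / (I.inorm V * M) →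
        HasSum (fun n : ℕ => z ^ (n + 1) •
            ∫ t, (t : ℂ) • ((RA t * V) ^ (n + 1) * RA t) ∂μ)
          (∫ t, (t : ℂ) • ((Rz z t).comp ((z • V).comp (RA t))) ∂μ)) ∧
      (∀ z : ℂ, ‖z‖ < 1 / (I.inorm V * M) →
        Summable (fun n : ℕ =>
          ‖z‖ ^ (n + 1) * I.inorm (∫ t, (t : ℂ) • ((RA t * V) ^ (n + 1) * RA t) ∂μ))) ∧
      AnalyticOnNhd ℂ
        (fun z : ℂ => ∫ t, (t : ℂ) • ((Rz z t).comp ((z • V).comp (RA t))) ∂μ)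
        (Metric.ball (0 : ℂ) (1 / (I.inorm V * M))) := by
  by_cases hpos : 0 < I.inorm V * M
  case neg =>
    -- degenerate case: the ball is empty
    have hr : 1 / (I.inorm V * M) ≤ 0 := by
      push_neg at hpos
      rcases lt_or_eq_of_le hpos with h | h
      · exact le_of_lt (one_div_neg.mpr h)
      · simp [h]
    refine ⟨fun z hz => absurd (lt_of_lt_of_le hz hr) (not_lt.mpr (norm_nonneg z)),
        fun z hz => absurd (lt_of_lt_of_le hz hr) (not_lt.mpr (norm_nonneg z)), ?_⟩
    rw [Metric.ball_eq_empty.mpr hr]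
    exact fun x hx => absurd hx (notMem_empty x)
  -- main case
  have hVnn : 0 ≤ I.inorm V := I.inorm_nonneg V
  have hMpos : 0 < M := by
    rcases mul_pos_iff.mp hpos with ⟨h1, h2⟩ | ⟨h1, h2⟩
    · exact h2
    · linarith
  have hVle : ‖V‖ ≤ I.inorm V := I.opNorm_le_inorm V hV
  have hub : ∀ t : ℝ, 0 < t → ‖RA t‖ ≤ M / (1 + t) := by
    intro t ht
    have h1t : (0:ℝ) < 1 + t := by linarith
    rw [le_div_iff₀ h1t]
    have := hM.1 (Set.mem_image_of_mem _ (show t ∈ Ioi (0:ℝ) from ht))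
    linarith [this]
  have hubM : ∀ t : ℝ, 0 < t → ‖RA t‖ ≤ M := fun t ht =>
    (hub t ht).trans (div_le_self hMpos.le (by linarith))
  have hae : ∀ᵐ t ∂μ, 0 < t := by
    rw [ae_iff]
    have : {t : ℝ | ¬ 0 < t} = Iic 0 := by ext u; simp
    rw [this]; exact hsupp
  have haem : ∀ᵐ t ∂μ, t ∈ Ioi (0:ℝ) := hae
  have hrestrict : μ.restrict (Ioi (0:ℝ)) = μ := Measure.restrict_eq_self_of_ae_mem haem
  -- continuity of the resolvent on `Ioi 0`
  have hlip : ∀ s ∈ Ioi (0:ℝ), ∀ t ∈ Ioi (0:ℝ), dist (RA s) (RA t) ≤ (M*M) * dist s t := by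
    intro s hs t ht
    have h := res1 (hRA s (le_of_lt hs)) (hRA t (le_of_lt ht))
    have hd : RA t - RA s = ((s:ℂ) - t) • ((RA s).comp (RA t)) := sub_eq_of_eq_add' h
    rw [dist_eq_norm, ← neg_sub, norm_neg, hd]
    refine (norm_smul (α := ℂ) (β := X →L[ℂ] X) _ _).trans_le ?_
    have hst : ‖(s:ℂ) - (t:ℂ)‖ = dist s t := by
      have hc : ((s:ℂ) - (t:ℂ)) = ((s - t : ℝ) : ℂ) := by push_cast; ring
      rw [hc, Complex.norm_real, dist_eq_norm]
    rw [hst, mul_comm]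
    apply mul_le_mul_of_nonneg_right _ dist_nonneg
    exact ((RA s).opNorm_comp_le (RA t)).trans
      (mul_le_mul (hubM s hs) (hubM t ht) (norm_nonneg _) hMpos.le)
  have hcont : ContinuousOn RA (Ioi (0:ℝ)) := by
    have : LipschitzOnWith ((M*M).toNNReal) RA (Ioi (0:ℝ)) := by
      apply LipschitzOnWith.of_dist_le_mul
      intro s hs t ht
      rw [Real.coe_toNNReal _ (by positivity)]
      exact hlip s hs t ht
    exact this.continuousOn
  -- measurability and integrability of the coefficient integrands
  have hfc : ∀ n : ℕ, ContinuousOn (fun t : ℝ => (t:ℂ) • ((RA t * V) ^ (n+1) * RA t)) (Ioi 0) :=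
    fun n => (Complex.continuous_ofReal.continuousOn).smul
      (((hcont.mul continuousOn_const).pow _).mul hcont)
  have hfm : ∀ n : ℕ, AEStronglyMeasurable (fun t : ℝ => (t:ℂ) • ((RA t * V) ^ (n+1) * RA t)) μ :=
    fun n => by
      rw [← hrestrict]
      haveI : SecondCountableTopologyEither ℝ (X →L[ℂ] X) :=
        secondCountableTopologyEither_of_left ℝ _
      exact (hfc n).aestronglyMeasurable measurableSet_Ioi
  have hg_int : ∀ n : ℕ,
      Integrable (fun t : ℝ => (I.inorm V * M)^(n+1) * M * (1+t)⁻¹) μ := by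
    intro n
    have := hμ.const_mul ((I.inorm V * M)^(n+1) * M)
    simpa [mul_assoc] using this
  -- the fundamental pointwise bound
  have hbound : ∀ n : ℕ, ∀ᵐ (t : ℝ) ∂μ,
      (I.Mem ((t:ℂ) • ((RA t * V) ^ (n+1) * RA t)) ∧
        I.inorm ((t:ℂ) • ((RA t * V) ^ (n+1) * RA t)) ≤ (I.inorm V * M)^(n+1) * M * (1+t)⁻¹) ∧
      ‖(t:ℂ) • ((RA t * V) ^ (n+1) * RA t)‖ ≤ (I.inorm V * M)^(n+1) * M * (1+t)⁻¹ := by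
    intro n
    filter_upwards [hae] with t ht
    have h1t : (0:ℝ) < 1 + t := by linarith
    have htn : ‖(t:ℂ)‖ = t := by
      rw [Complex.norm_real, Real.norm_eq_abs, abs_of_pos ht]
    have hm1 : ‖RA t‖ * ‖V‖ ≤ M / (1+t) * I.inorm V :=
      mul_le_mul (hub t ht) hVle (norm_nonneg _) (by positivity)
    have hBle : ‖(RA t * V) ^ n * RA t‖ ≤ (M / (1+t) * I.inorm V)^n * (M / (1+t)) := by
      refine (pow_mul_norm (RA t) V n).trans ?_
      exact mul_le_mul (pow_le_pow_left₀ (by positivity) hm1 n) (hub t ht)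
        (norm_nonneg _) (by positivity)
    have hkey : t * (M / (1+t) * (I.inorm V * ((M / (1+t) * I.inorm V)^n * (M / (1+t)))))
        ≤ (I.inorm V * M)^(n+1) * M * (1+t)⁻¹ := by
      have := real_bound (M := M) (c := I.inorm V) hMpos.le hVnn ht n
      calc t * (M / (1+t) * (I.inorm V * ((M / (1+t) * I.inorm V)^n * (M / (1+t)))))
          = t * ((M / (1+t) * I.inorm V) ^ (n+1) * (M / (1+t))) := by ring
      _ ≤ (I.inorm V * M)^(n+1) * M * (1+t)⁻¹ := this
    refine ⟨⟨?_, ?_⟩, ?_⟩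
    · rw [decomp]
      exact I.smul_mem _ (I.comp_mem _ _ hV)
    · rw [decomp, I.inorm_smul, htn]
      refine le_trans ?_ hkey
      have := I.inorm_comp_le (RA t) V ((RA t * V)^n * RA t) hV
      calc t * I.inorm ((RA t).comp (V.comp ((RA t * V)^n * RA t)))
          ≤ t * (‖RA t‖ * I.inorm V * ‖(RA t * V)^n * RA t‖) := by
            exact mul_le_mul_of_nonneg_left this ht.le
      _ ≤ t * (M / (1+t) * (I.inorm V * ((M / (1+t) * I.inorm V)^n * (M / (1+t))))) := by
            rw [mul_assoc (‖RA t‖)]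
            apply mul_le_mul_of_nonneg_left _ ht.le
            exact mul_le_mul (hub t ht) (mul_le_mul_of_nonneg_left hBle hVnn)
              (by positivity) (by positivity)
    · refine (norm_smul (α := ℂ) (β := X →L[ℂ] X) _ _).trans_le ?_
      rw [htn]
      refine le_trans ?_ hkey
      have h1 : ‖(RA t * V) ^ (n+1) * RA t‖ ≤ (‖RA t‖ * ‖V‖)^(n+1) * ‖RA t‖ :=
        pow_mul_norm (RA t) V (n+1)
      calc t * ‖(RA t * V) ^ (n+1) * RA t‖
          ≤ t * ((‖RA t‖ * ‖V‖)^(n+1) * ‖RA t‖) := mul_le_mul_of_nonneg_left h1 ht.le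
      _ ≤ t * ((M / (1+t) * I.inorm V) ^ (n+1) * (M / (1+t))) := by
            apply mul_le_mul_of_nonneg_left _ ht.le
            exact mul_le_mul (pow_le_pow_left₀ (by positivity) hm1 (n+1)) (hub t ht)
              (norm_nonneg _) (by positivity)
      _ = t * (M / (1+t) * (I.inorm V * ((M / (1+t) * I.inorm V)^n * (M / (1+t))))) := by ring
  have hfint : ∀ n : ℕ, Integrable (fun t : ℝ => (t:ℂ) • ((RA t * V) ^ (n+1) * RA t)) μ :=
    fun n => Integrable.mono' (hg_int n) (hfm n) ((hbound n).mono fun t h => h.2)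
  have hKnn : 0 ≤ ∫ t, (1+t)⁻¹ ∂μ := by
    apply integral_nonneg_of_ae
    filter_upwards [hae] with t ht
    positivity
  have hgval : ∀ n : ℕ, ∫ t, (I.inorm V * M)^(n+1) * M * (1+t)⁻¹ ∂μ
      = (I.inorm V * M)^(n+1) * M * ∫ t, (1+t)⁻¹ ∂μ := by
    intro n
    rw [← integral_const_mul]
  have hCmem : ∀ n : ℕ, I.Mem (∫ t, (t:ℂ) • ((RA t * V) ^ (n+1) * RA t) ∂μ) ∧
      I.inorm (∫ t, (t:ℂ) • ((RA t * V) ^ (n+1) * RA t) ∂μ)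
        ≤ (I.inorm V * M)^(n+1) * M * ∫ t, (1+t)⁻¹ ∂μ := by
    intro n
    have := I.integral_mem μ _ _ (hg_int n) ((hbound n).mono fun t h => h.1) (hfint n)
    rwa [hgval n] at this
  -- the central HasSum statement
  have hmain : ∀ z : ℂ, ‖z‖ < 1 / (I.inorm V * M) →
      HasSum (fun n : ℕ => z ^ (n + 1) • ∫ t, (t : ℂ) • ((RA t * V) ^ (n + 1) * RA t) ∂μ)
        (∫ t, (t : ℂ) • ((Rz z t).comp ((z • V).comp (RA t))) ∂μ) := by
    intro z hz
    have hzq : ‖z‖ * (I.inorm V * M) < 1 := (lt_div_iff₀ hpos).mp hz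
    have hzq0 : (0:ℝ) ≤ ‖z‖ * (I.inorm V * M) := by positivity
    have hFint : ∀ n : ℕ,
        Integrable (fun t : ℝ => z^(n+1) • ((t:ℂ) • ((RA t * V) ^ (n+1) * RA t))) μ :=
      fun n => (hfint n).smul (z^(n+1))
    have hFsum : Summable
        (fun n : ℕ => ∫ t, ‖z^(n+1) • ((t:ℂ) • ((RA t * V) ^ (n+1) * RA t))‖ ∂μ) := by
      have hgeo : Summable
          (fun n : ℕ => (‖z‖ * (I.inorm V * M))^(n+1) * (M * ∫ t, (1+t)⁻¹ ∂μ)) := by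
        have h1 := (summable_geometric_of_lt_one hzq0 hzq).mul_right (M * ∫ t, (1+t)⁻¹ ∂μ)
        exact (h1.mul_left (‖z‖ * (I.inorm V * M))).congr
          (fun n => by rw [← mul_assoc, ← pow_succ'])
      refine Summable.of_nonneg_of_le (fun n => integral_nonneg fun t => norm_nonneg _)
        (fun n => ?_) hgeo
      have heq : ∀ t : ℝ, ‖z^(n+1) • ((t:ℂ) • ((RA t * V) ^ (n+1) * RA t))‖
          = ‖z‖^(n+1) * ‖(t:ℂ) • ((RA t * V) ^ (n+1) * RA t)‖ := by
        intro t
        rw [norm_smul (α := ℂ) (β := X →L[ℂ] X) _ _, norm_pow]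
      calc ∫ t, ‖z^(n+1) • ((t:ℂ) • ((RA t * V) ^ (n+1) * RA t))‖ ∂μ
          = ‖z‖^(n+1) * ∫ t, ‖(t:ℂ) • ((RA t * V) ^ (n+1) * RA t)‖ ∂μ := by
            rw [← integral_const_mul]
            exact integral_congr_ae (Filter.Eventually.of_forall heq)
      _ ≤ ‖z‖^(n+1) * ((I.inorm V * M)^(n+1) * M * ∫ t, (1+t)⁻¹ ∂μ) := by
            apply mul_le_mul_of_nonneg_left _ (by positivity)
            refine le_trans (integral_mono_ae ((hfint n).norm) (hg_int n)
              ((hbound n).mono fun t h => h.2)) ?_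
            rw [hgval n]
      _ = (‖z‖ * (I.inorm V * M))^(n+1) * (M * ∫ t, (1+t)⁻¹ ∂μ) := by ring
    have key := MeasureTheory.hasSum_integral_of_summable_integral_norm hFint hFsum
    simp_rw [integral_smul] at key
    have h2 : ∫ t, (∑' n : ℕ, z^(n+1) • ((t:ℂ) • ((RA t * V) ^ (n+1) * RA t))) ∂μ
        = ∫ t, (t : ℂ) • ((Rz z t).comp ((z • V).comp (RA t))) ∂μ := by
      apply integral_congr_ae
      filter_upwards [hae] with t ht
      have hbnorm : ‖RA t * (z • V)‖ < 1 := by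
        calc ‖RA t * (z • V)‖ ≤ ‖RA t‖ * ‖z • V‖ := norm_mul_le _ _
        _ ≤ M * (‖z‖ * ‖V‖) := by
            refine mul_le_mul (hubM t ht) (le_of_eq ?_) (norm_nonneg _) hMpos.le
            exact norm_smul (α := ℂ) (β := X →L[ℂ] X) _ _
        _ ≤ M * (‖z‖ * I.inorm V) := by
            apply mul_le_mul_of_nonneg_left _ hMpos.le
            exact mul_le_mul_of_nonneg_left hVle (norm_nonneg z)
        _ = ‖z‖ * (I.inorm V * M) := by ring
        _ < 1 := hzq
      have hp := pointwise_hasSum (hRA t ht.le) (hRz z hz t ht.le) hbnorm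
      have hq := hp.const_smul ((t:ℂ))
      have heq2 : (fun n : ℕ => z^(n+1) • ((t:ℂ) • ((RA t * V) ^ (n+1) * RA t)))
          = fun n : ℕ => (t:ℂ) • (z^(n+1) • ((RA t * V) ^ (n+1) * RA t)) := by
        funext n; rw [smul_comm]
      rw [heq2]
      exact hq.tsum_eq
    rw [h2] at key
    exact key
  -- absolute summability in the ideal norm
  have hsummable : ∀ z : ℂ, ‖z‖ < 1 / (I.inorm V * M) →
      Summable (fun n : ℕ =>
        ‖z‖ ^ (n + 1) * I.inorm (∫ t, (t : ℂ) • ((RA t * V) ^ (n + 1) * RA t) ∂μ)) := by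
    intro z hz
    have hzq : ‖z‖ * (I.inorm V * M) < 1 := (lt_div_iff₀ hpos).mp hz
    have hzq0 : (0:ℝ) ≤ ‖z‖ * (I.inorm V * M) := by positivity
    have hgeo : Summable
        (fun n : ℕ => (‖z‖ * (I.inorm V * M))^(n+1) * (M * ∫ t, (1+t)⁻¹ ∂μ)) := by
      have h1 := (summable_geometric_of_lt_one hzq0 hzq).mul_right (M * ∫ t, (1+t)⁻¹ ∂μ)
      exact (h1.mul_left (‖z‖ * (I.inorm V * M))).congr
        (fun n => by rw [← mul_assoc, ← pow_succ'])
    refine Summable.of_nonneg_of_le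
      (fun n => mul_nonneg (by positivity) (I.inorm_nonneg _)) (fun n => ?_) hgeo
    calc ‖z‖ ^ (n + 1) * I.inorm (∫ t, (t : ℂ) • ((RA t * V) ^ (n + 1) * RA t) ∂μ)
        ≤ ‖z‖ ^ (n + 1) * ((I.inorm V * M)^(n+1) * M * ∫ t, (1+t)⁻¹ ∂μ) :=
          mul_le_mul_of_nonneg_left (hCmem n).2 (by positivity)
    _ = (‖z‖ * (I.inorm V * M))^(n+1) * (M * ∫ t, (1+t)⁻¹ ∂μ) := by ring
  refine ⟨hmain, hsummable, ?_⟩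
  -- analyticity via an explicit power series
  set K : ℝ := ∫ t, (1+t)⁻¹ ∂μ with hKdef
  let c : ℕ → (X →L[ℂ] X) := fun n =>
    Nat.casesOn n 0 (fun m => ∫ t, (t : ℂ) • ((RA t * V) ^ (m + 1) * RA t) ∂μ)
  let p : FormalMultilinearSeries ℂ ℂ (X →L[ℂ] X) := fun n =>
    ContinuousMultilinearMap.mkPiRing ℂ (Fin n) (c n)
  have hcnorm : ∀ n : ℕ, ‖c n‖ ≤ (I.inorm V * M)^n * (M * K) := by
    intro n
    cases n with
    | zero => simp [c]; positivity
    | succ m =>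
      have h1 : ‖c (m+1)‖ ≤ I.inorm (c (m+1)) := I.opNorm_le_inorm _ (hCmem m).1
      refine h1.trans ((hCmem m).2.trans (le_of_eq (by rw [hKdef]; ring)))
  have hFP : HasFPowerSeriesOnBall
      (fun z : ℂ => ∫ t, (t : ℂ) • ((Rz z t).comp ((z • V).comp (RA t))) ∂μ) p 0
      (ENNReal.ofReal (1 / (I.inorm V * M))) := by
    have hrpos : (0:ℝ) < 1 / (I.inorm V * M) := by positivity
    constructor
    · -- radius bound
      apply ENNReal.le_of_forall_nnreal_lt
      intro ρ hρ
      have hρr : (ρ:ℝ) < 1 / (I.inorm V * M) := by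
        rw [← ENNReal.ofReal_coe_nnreal] at hρ
        exact (ENNReal.ofReal_lt_ofReal_iff hrpos).mp hρ
      have hρq : (ρ:ℝ) * (I.inorm V * M) < 1 := (lt_div_iff₀ hpos).mp hρr
      apply FormalMultilinearSeries.le_radius_of_bound _ (M * K)
      intro n
      have hpn : ‖p n‖ = ‖c n‖ := ContinuousMultilinearMap.norm_mkPiRing (c n)
      rw [hpn]
      calc ‖c n‖ * (ρ:ℝ)^n ≤ ((I.inorm V * M)^n * (M * K)) * (ρ:ℝ)^n :=
            mul_le_mul_of_nonneg_right (hcnorm n) (by positivity)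
      _ = ((ρ:ℝ) * (I.inorm V * M))^n * (M * K) := by ring
      _ ≤ 1 * (M * K) := by
            apply mul_le_mul_of_nonneg_right _ (by positivity)
            exact pow_le_one₀ (by positivity) hρq.le
      _ = M * K := one_mul _
    · exact ENNReal.ofReal_pos.mpr hrpos
    · intro y hy
      have hy' : ‖y‖ < 1 / (I.inorm V * M) := by
        rw [EMetric.mem_ball, edist_zero_right, ← ofReal_norm] at hy
        exact (ENNReal.ofReal_lt_ofReal_iff hrpos).mp hy
      have hs := hmain y hy'
      rw [zero_add]
      have hps : (fun n : ℕ => p n fun _ => y) = fun n : ℕ => y^n • c n := by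
        funext n
        show (ContinuousMultilinearMap.mkPiRing ℂ (Fin n) (c n) : (Fin n → ℂ) → _) _ = _
        rw [ContinuousMultilinearMap.mkPiRing_apply]
        congr 1
        simp
      rw [hps]
      have hs' : HasSum (fun n : ℕ => (fun m : ℕ => y^m • c m) (n + 1))
          (∫ t, (t : ℂ) • ((Rz y t).comp ((y • V).comp (RA t))) ∂μ) := hs
      have := (hasSum_nat_add_iff (f := fun m : ℕ => y^m • c m) 1).mp hs'
      simpa [c] using this
  have hsub : Metric.ball (0:ℂ) (1 / (I.inorm V * M))
      ⊆ Metric.eball (0:ℂ) (ENNReal.ofReal (1 / (I.inorm V * M))) := by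
    rw [Metric.emetric_ball]
  exact fun x hx => hFP.analyticOnNhd x (hsub hx)
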